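/- arXiv:1008.4636 — 2 statements merged into one kernel-verified Lean document; each statement's English description precedes it below -/
import Mathlib

section
/- Let ρ₀, ρ₁ be density operators on a finite-dimensional complex Hilbert space. Then the maximum over all two-outcome measurements {P₀, P₁} of the quantity 1/2 + (1/4)⟨P₀ - P₁, ρ₀ - ρ₁⟩ equals 1/2 + (1/4)‖ρ₀ - ρ₁‖₁ (Helstrom's bound). -/
open Matrix ComplexOrder

/-- The trace norm of a matrix: the sum of its singular values, i.e. `Tr √(XᴴX)`. -/
noncomputable def traceNorm {n : ℕ} (X : Matrix (Fin n) (Fin n) ℂ) : ℝ :=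
  (((Matrix.posSemidef_conjTranspose_mul_self X).1.eigenvectorUnitary.1 *
    diagonal (((↑) : ℝ → ℂ) ∘ (√·) ∘ (Matrix.posSemidef_conjTranspose_mul_self X).1.eigenvalues) *
    (star (Matrix.posSemidef_conjTranspose_mul_self X).1.eigenvectorUnitary :
      Matrix (Fin n) (Fin n) ℂ)).trace).re

section helpers
variable {n : ℕ}

lemma conj_mul_conj {U A B : Matrix (Fin n) (Fin n) ℂ} (hUU : Uᴴ * U = 1) :
    (U * A * Uᴴ) * (U * B * Uᴴ) = U * (A * B) * Uᴴ := by
  have h : Uᴴ * (U * (B * Uᴴ)) = B * Uᴴ := by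
    rw [← Matrix.mul_assoc, hUU, Matrix.one_mul]
  simp only [Matrix.mul_assoc, h]

lemma psd_sq_eq_sqrt (X B : Matrix (Fin n) (Fin n) ℂ) (hB : B.PosSemidef) (hsq : B ^ 2 = Xᴴ * X) :
  B = ((Matrix.posSemidef_conjTranspose_mul_self X).1.eigenvectorUnitary.1 *
    diagonal (((↑) : ℝ → ℂ) ∘ (√·) ∘ (Matrix.posSemidef_conjTranspose_mul_self X).1.eigenvalues) *
    (star (Matrix.posSemidef_conjTranspose_mul_self X).1.eigenvectorUnitary :
      Matrix (Fin n) (Fin n) ℂ)) := by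
  open scoped MatrixOrder Matrix.Norms.L2Operator in
  have h1 := (posSemidef_conjTranspose_mul_self X).1.cfc_eq Real.sqrt
  open scoped MatrixOrder Matrix.Norms.L2Operator in
  rw [← cfcₙ_eq_cfc (hf0 := Real.sqrt_zero), ← CFC.sqrt_eq_real_sqrt _ (posSemidef_conjTranspose_mul_self X).nonneg
    ] at h1
  open scoped MatrixOrder Matrix.Norms.L2Operator in
  have h2 : CFC.sqrt (Xᴴ * X) = B :=
    (CFC.sqrt_eq_iff _ _ (posSemidef_conjTranspose_mul_self X).nonneg hB.nonneg).2 (by rw [← sq, hsq])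
  rw [← h2, h1]
  rfl

lemma trace_conj {U A : Matrix (Fin n) (Fin n) ℂ} (hUU : Uᴴ * U = 1) :
    (U * A * Uᴴ).trace = A.trace := by
  rw [Matrix.trace_mul_cycle, hUU, Matrix.one_mul]

lemma traceNorm_eq_sum_abs {X : Matrix (Fin n) (Fin n) ℂ} (hX : X.IsHermitian) :
    traceNorm X = ∑ i, |hX.eigenvalues i| := by
  classical
  set U : Matrix (Fin n) (Fin n) ℂ := (hX.eigenvectorUnitary : Matrix (Fin n) (Fin n) ℂ) with hU
  have hUU : Uᴴ * U = 1 := by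
    rw [← star_eq_conjTranspose]; exact Unitary.coe_star_mul_self hX.eigenvectorUnitary
  set D : Matrix (Fin n) (Fin n) ℂ := diagonal (fun i => (Complex.ofReal |hX.eigenvalues i|)) with hD
  have hBpsd : (U * D * Uᴴ).PosSemidef := by
    refine (Matrix.PosSemidef.diagonal fun i => ?_).mul_mul_conjTranspose_same U
    exact Complex.zero_le_real.mpr (abs_nonneg _)
  have hspec : X = U * diagonal (Complex.ofReal ∘ hX.eigenvalues) * Uᴴ := by
    rw [← star_eq_conjTranspose]; exact hX.spectral_theorem
  have hsq : (U * D * Uᴴ) ^ 2 = Xᴴ * X := by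
    rw [pow_two, conj_mul_conj hUU, hX.eq]
    conv_rhs => rw [hspec]
    rw [conj_mul_conj hUU]
    congr 2
    rw [hD, diagonal_mul_diagonal, diagonal_mul_diagonal]
    funext i
    simp [← Complex.ofReal_mul, abs_mul_abs_self]
  have hsqrt : (U * D * Uᴴ) = ((Matrix.posSemidef_conjTranspose_mul_self X).1.eigenvectorUnitary.1 *
    diagonal (((↑) : ℝ → ℂ) ∘ (√·) ∘ (Matrix.posSemidef_conjTranspose_mul_self X).1.eigenvalues) *
    (star (Matrix.posSemidef_conjTranspose_mul_self X).1.eigenvectorUnitary :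
      Matrix (Fin n) (Fin n) ℂ)) :=
    psd_sq_eq_sqrt X _ hBpsd hsq
  rw [traceNorm, ← hsqrt, trace_conj hUU, hD]
  rw [Matrix.trace_diagonal]
  simp

lemma diag_re_nonneg {N : Matrix (Fin n) (Fin n) ℂ} (hN : N.PosSemidef) (i : Fin n) :
    0 ≤ (N i i).re := by
  have := hN.re_dotProduct_nonneg (Pi.single i 1)
  simpa [dotProduct, mulVec, Pi.single_apply, Finset.sum_ite_eq, Finset.sum_ite_eq'] using this

end helpers

lemma trace_mul_diagonal' {n : ℕ} (N : Matrix (Fin n) (Fin n) ℂ) (d : Fin n → ℂ) :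
    (N * diagonal d).trace = ∑ i, N i i * d i := by
  simp [Matrix.trace, Matrix.diag, Matrix.mul_diagonal]

/-- Helstrom's bound: for density operators `ρ₀, ρ₁`, the maximum of
`1/2 + (1/4)⟨P₀ - P₁, ρ₀ - ρ₁⟩` over all two-outcome measurements `{P₀, P₁}`
equals `1/2 + (1/4)‖ρ₀ - ρ₁‖₁`. -/
theorem stmt2 {n : ℕ} (ρ₀ ρ₁ : Matrix (Fin n) (Fin n) ℂ)
    (h₀ : ρ₀.PosSemidef) (h₁ : ρ₁.PosSemidef)
    (t₀ : ρ₀.trace = 1) (t₁ : ρ₁.trace = 1) :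
    IsGreatest {p : ℝ | ∃ P₀ P₁ : Matrix (Fin n) (Fin n) ℂ,
        P₀.PosSemidef ∧ P₁.PosSemidef ∧ P₀ + P₁ = 1 ∧
        p = 1/2 + (1/4) * (((P₀ - P₁) * (ρ₀ - ρ₁)).trace).re}
      (1/2 + (1/4) * traceNorm (ρ₀ - ρ₁)) := by
  classical
  have hX : (ρ₀ - ρ₁).IsHermitian := h₀.1.sub h₁.1
  set X := ρ₀ - ρ₁ with hXdef
  set U : Matrix (Fin n) (Fin n) ℂ := (hX.eigenvectorUnitary : Matrix (Fin n) (Fin n) ℂ) with hU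
  have hUU : Uᴴ * U = 1 := by
    rw [← star_eq_conjTranspose]; exact Unitary.coe_star_mul_self hX.eigenvectorUnitary
  have hUU' : U * Uᴴ = 1 := by
    rw [← star_eq_conjTranspose]; exact Unitary.coe_mul_star_self hX.eigenvectorUnitary
  have hspec : X = U * diagonal (Complex.ofReal ∘ hX.eigenvalues) * Uᴴ := by
    rw [← star_eq_conjTranspose]; exact hX.spectral_theorem
  have htn : traceNorm X = ∑ i, |hX.eigenvalues i| := traceNorm_eq_sum_abs hX
  constructor
  · -- membership: construct optimal measurement
    set e : Fin n → ℂ := fun i => if 0 ≤ hX.eigenvalues i then 1 else 0 with he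
    set f : Fin n → ℂ := fun i => if 0 ≤ hX.eigenvalues i then 0 else 1 with hf
    refine ⟨U * diagonal e * Uᴴ, U * diagonal f * Uᴴ, ?_, ?_, ?_, ?_⟩
    · refine (Matrix.PosSemidef.diagonal fun i => ?_).mul_mul_conjTranspose_same U
      simp only [he]; split <;> simp
    · refine (Matrix.PosSemidef.diagonal fun i => ?_).mul_mul_conjTranspose_same U
      simp only [hf]; split <;> simp
    · have hef : e + f = fun _ => (1:ℂ) := by
        funext i; simp only [Pi.add_apply, he, hf]; split <;> simp
      have : diagonal e + diagonal f = 1 := by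
        rw [diagonal_add]
        have h3 : (fun i => e i + f i) = fun _ => (1:ℂ) := funext fun i => congrFun hef i
        rw [h3, diagonal_one]
      calc U * diagonal e * Uᴴ + U * diagonal f * Uᴴ
          = U * (diagonal e + diagonal f) * Uᴴ := by noncomm_ring
        _ = 1 := by rw [this, Matrix.mul_one, hUU']
    · have hdiff : U * diagonal e * Uᴴ - U * diagonal f * Uᴴ
          = U * diagonal (e - f) * Uᴴ := by
        have h2 : diagonal e - diagonal f = diagonal (e - f) := by rw [diagonal_sub]; rfl
        rw [← h2]; noncomm_ring
      rw [hdiff]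
      have hmul : (U * diagonal (e - f) * Uᴴ) * X
          = U * (diagonal (e - f) * diagonal (Complex.ofReal ∘ hX.eigenvalues)) * Uᴴ := by
        conv_lhs => rw [hspec]
        exact conj_mul_conj hUU
      rw [htn, hmul, trace_conj hUU, diagonal_mul_diagonal, Matrix.trace_diagonal]
      congr 2
      have : ∀ i, ((e - f) i * (Complex.ofReal ∘ hX.eigenvalues) i)
          = Complex.ofReal |hX.eigenvalues i| := by
        intro i
        simp only [Pi.sub_apply, he, hf, Function.comp_apply]
        rcases le_or_gt 0 (hX.eigenvalues i) with h | h
        · rw [if_pos h, if_pos h, abs_of_nonneg h]; ring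
        · rw [if_neg (not_le.mpr h), if_neg (not_le.mpr h), abs_of_neg h]
          push_cast; ring
      rw [Finset.sum_congr rfl (fun i _ => this i)]
      simp
  · -- upper bound
    rintro p ⟨P₀, P₁, hP₀, hP₁, hsum, rfl⟩
    have key : (((P₀ - P₁) * X).trace).re ≤ traceNorm X := by
      set N₀ := Uᴴ * P₀ * U with hN₀
      set N₁ := Uᴴ * P₁ * U with hN₁
      have hN₀p : N₀.PosSemidef := hP₀.conjTranspose_mul_mul_same U
      have hN₁p : N₁.PosSemidef := hP₁.conjTranspose_mul_mul_same U
      have hNsum : N₀ + N₁ = 1 := by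
        rw [hN₀, hN₁]
        calc Uᴴ * P₀ * U + Uᴴ * P₁ * U = Uᴴ * (P₀ + P₁) * U := by noncomm_ring
          _ = 1 := by rw [hsum, Matrix.mul_one, hUU]
      have htr : ((P₀ - P₁) * X).trace
          = ∑ i, (N₀ - N₁) i i * Complex.ofReal (hX.eigenvalues i) := by
        conv_lhs => rw [hspec]
        have : (P₀ - P₁) * (U * diagonal (Complex.ofReal ∘ hX.eigenvalues) * Uᴴ)
            = ((P₀ - P₁) * U * diagonal (Complex.ofReal ∘ hX.eigenvalues)) * Uᴴ := by
          noncomm_ring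
        rw [this, Matrix.trace_mul_cycle]
        have : Uᴴ * ((P₀ - P₁) * U) = N₀ - N₁ := by
          rw [hN₀, hN₁]; noncomm_ring
        rw [this, trace_mul_diagonal']
        rfl
      rw [htr, htn, Complex.re_sum]
      apply Finset.sum_le_sum
      intro i _
      have h0 : 0 ≤ (N₀ i i).re := diag_re_nonneg hN₀p i
      have h1 : 0 ≤ (N₁ i i).re := diag_re_nonneg hN₁p i
      have hs : (N₀ i i).re + (N₁ i i).re = 1 := by
        have := congrArg (fun M => (M i i).re) hNsum
        simpa using this
      have habs : |((N₀ - N₁) i i).re| ≤ 1 := by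
        rw [abs_le]
        constructor <;> simp only [Matrix.sub_apply, Complex.sub_re] <;> nlinarith
      calc (((N₀ - N₁) i i) * Complex.ofReal (hX.eigenvalues i)).re
          = ((N₀ - N₁) i i).re * hX.eigenvalues i := by
            simp [Complex.mul_re]
        _ ≤ |((N₀ - N₁) i i).re * hX.eigenvalues i| := le_abs_self _
        _ = |((N₀ - N₁) i i).re| * |hX.eigenvalues i| := abs_mul _ _
        _ ≤ 1 * |hX.eigenvalues i| := by
            exact mul_le_mul_of_nonneg_right habs (abs_nonneg _)
        _ = |hX.eigenvalues i| := one_mul _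
    linarith
end

section
/- Let S₀ and S₁ be nonempty compact convex subsets of a finite-dimensional real inner product space V, let N be a norm on V with dual norm N*, and let d = min{N(s₀ - s₁) : s₀ ∈ S₀, s₁ ∈ S₁} and suppose d > 0. Then there exists a vector h ∈ V with N*(h) ≤ 1 such that ⟨h, s₀ - s₁⟩ ≥ d for all s₀ ∈ S₀, s₁ ∈ S₁. -/
open scoped Pointwise


/-- Separation theorem core of the distinguishability theorem: for nonempty compact convex
sets `S₀, S₁` in a finite-dimensional real inner product space and a norm `N` with minimal
distance `d = min{N(s₀ - s₁)} > 0`, there is `h` with dual norm `N*(h) ≤ 1` such that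
`⟨h, s₀ - s₁⟩ ≥ d` for all `s₀ ∈ S₀`, `s₁ ∈ S₁`. -/
theorem stmt8 {V : Type*} [NormedAddCommGroup V] [InnerProductSpace ℝ V]
    [FiniteDimensional ℝ V] (S₀ S₁ : Set V)
    (h₀ne : S₀.Nonempty) (h₁ne : S₁.Nonempty)
    (h₀cpt : IsCompact S₀) (h₁cpt : IsCompact S₁)
    (h₀conv : Convex ℝ S₀) (h₁conv : Convex ℝ S₁)
    (N : V → ℝ)
    (hN_tri : ∀ x y, N (x + y) ≤ N x + N y)
    (hN_smul : ∀ (a : ℝ) (x), N (a • x) = |a| * N x)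
    (hN_pos : ∀ x, N x = 0 → x = 0)
    (d : ℝ) (hd : 0 < d)
    (hdmin : IsLeast {r : ℝ | ∃ s₀ ∈ S₀, ∃ s₁ ∈ S₁, r = N (s₀ - s₁)} d) :
    ∃ h : V, (∀ y, N y ≤ 1 → inner ℝ h y ≤ (1 : ℝ)) ∧
      ∀ s₀ ∈ S₀, ∀ s₁ ∈ S₁, d ≤ (inner ℝ h (s₀ - s₁) : ℝ) := by
  -- N is nonnegative
  have hN0 : N 0 = 0 := by
    have := hN_smul 0 0; simpa using this
  have hNnonneg : ∀ x, 0 ≤ N x := by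
    intro x
    have h1 : N (x + -x) ≤ N x + N (-x) := hN_tri x (-x)
    have h2 : N (-x) = N x := by
      have := hN_smul (-1) x; simpa using this
    have : (0:ℝ) ≤ N x + N x := by
      simpa [hN0, h2] using h1
    linarith
  -- N is convex
  have hNconv : ConvexOn ℝ Set.univ N := by
    refine ⟨convex_univ, fun x _ y _ a b ha hb _ => ?_⟩
    calc N (a • x + b • y) ≤ N (a • x) + N (b • y) := hN_tri _ _
      _ = a * N x + b * N y := by rw [hN_smul, hN_smul, abs_of_nonneg ha, abs_of_nonneg hb]
      _ = a • N x + b • N y := by simp [smul_eq_mul]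
  have hNcont : Continuous N := by
    rw [← continuousOn_univ]
    exact hNconv.continuousOn isOpen_univ
  -- The open ball B = {y | N y < d}
  set B : Set V := {y | N y < d} with hB
  have hBopen : IsOpen B := isOpen_lt hNcont continuous_const
  have hBconv : Convex ℝ B := by
    intro x hx y hy a b ha hb hab
    have : N (a • x + b • y) ≤ a * N x + b * N y :=
      le_trans (hN_tri _ _) (by rw [hN_smul, hN_smul, abs_of_nonneg ha, abs_of_nonneg hb])
    have hlt : a * N x + b * N y < d := by
      rcases eq_or_lt_of_le ha with rfl | ha'
      · simpa using mul_lt_mul_of_pos_left hy (by linarith : (0:ℝ) < b) |>.trans_le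
          (le_of_eq (by simp [show b = 1 by linarith]))
      rcases eq_or_lt_of_le hb with rfl | hb'
      · have : a = 1 := by linarith
        simpa [this, hB] using hx
      calc a * N x + b * N y < a * d + b * d := by
            apply add_lt_add <;> [exact (mul_lt_mul_of_pos_left hx ha');
              exact (mul_lt_mul_of_pos_left hy hb')]
        _ = d := by rw [← add_mul, hab, one_mul]
    exact lt_of_le_of_lt this hlt
  -- The difference set D
  classical
  set D : Set V := {x | ∃ s₀ ∈ S₀, ∃ s₁ ∈ S₁, x = s₀ - s₁} with hD
  have hDeq : D = S₀ - S₁ := by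
    ext x
    simp only [hD, Set.mem_setOf_eq, Set.mem_sub]
    constructor
    · rintro ⟨a, ha, b, hb, rfl⟩; exact ⟨a, ha, b, hb, rfl⟩
    · rintro ⟨a, ha, b, hb, rfl⟩; exact ⟨a, ha, b, hb, rfl⟩
  have hDconv : Convex ℝ D := hDeq ▸ h₀conv.sub h₁conv
  have hdisj : Disjoint B D := by
    rw [Set.disjoint_left]
    rintro x hx ⟨s₀, hs₀, s₁, hs₁, rfl⟩
    have : d ≤ N (s₀ - s₁) := hdmin.2 ⟨s₀, hs₀, s₁, hs₁, rfl⟩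
    exact absurd this (not_le.mpr hx)
  obtain ⟨f, u, hfu1, hfu2⟩ := geometric_hahn_banach_open hBconv hBopen hDconv hdisj
  have h0B : (0 : V) ∈ B := by simpa [hB, hN0] using hd
  have hu_pos : 0 < u := by
    have := hfu1 0 h0B; simpa using this
  -- f y ≤ u / d whenever N y ≤ 1
  have hkey : ∀ y, N y ≤ 1 → f y ≤ u / d := by
    intro y hy
    by_contra hc
    push_neg at hc
    have hfy_pos : 0 < f y := lt_trans (div_pos hu_pos hd) hc
    have h1 : u / f y < d := by
      rw [div_lt_iff₀ hfy_pos]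
      have := (div_lt_iff₀' hd).mp hc
      linarith [this]
    obtain ⟨t, ht1, ht2⟩ := exists_between h1
    have ht_pos : 0 < t := lt_trans (div_pos hu_pos hfy_pos) ht1
    have hmem : t • y ∈ B := by
      have : N (t • y) = t * N y := by rw [hN_smul, abs_of_nonneg ht_pos.le]
      have hle : t * N y ≤ t := by nlinarith
      simp only [hB, Set.mem_setOf_eq, this]
      linarith
    have h3 : f (t • y) < u := hfu1 _ hmem
    rw [map_smul, smul_eq_mul] at h3
    have h4 : u < t * f y := (div_lt_iff₀ hfy_pos).mp ht1
    linarith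
  -- representing vector
  set hf : V := (InnerProductSpace.toDual ℝ V).symm f with hfdef
  have hf_apply : ∀ x, (inner ℝ hf x : ℝ) = f x := fun x =>
    InnerProductSpace.toDual_symm_apply
  refine ⟨(d / u) • hf, ?_, ?_⟩
  · intro y hy
    rw [real_inner_smul_left, hf_apply]
    have : f y ≤ u / d := hkey y hy
    have hdu : 0 < d / u := div_pos hd hu_pos
    calc d / u * f y ≤ d / u * (u / d) := by nlinarith
      _ = 1 := by field_simp
  · intro s₀ hs₀ s₁ hs₁
    have hmem : s₀ - s₁ ∈ D := ⟨s₀, hs₀, s₁, hs₁, rfl⟩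
    have := hfu2 _ hmem
    rw [real_inner_smul_left, hf_apply]
    have hdu : 0 < d / u := div_pos hd hu_pos
    calc d = d / u * u := by field_simp
      _ ≤ d / u * f (s₀ - s₁) := by nlinarith
end
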